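/- arXiv:2605.09975 — 6 statements merged into one kernel-verified Lean document; each statement's English description precedes it below -/
import Mathlib

section
/- Let 1 < p < ∞ with conjugate q, let (v*, r*) be optimal for the primal Chebyshev-center problem max r s.t. ĝ_i^T v ≥ r, ‖v‖_q ≤ 1, and let α* be optimal for the dual min_{α∈Δ^m} ‖Σ α_i ĝ_i‖_p. Set w* = Σ_i α*_i ĝ_i. If r* > 0, then w* ≠ 0 and v* = sgn(w*) ⊙ |w*|^{p-1} / ‖w*‖_p^{p-1}. -/
open Real Filter Set

open Real Filter Set

lemma young_eq {p q a b : ℝ} (hpq : p.HolderConjugate q) (ha : 0 ≤ a) (hb : 0 ≤ b)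
    (h : a * b = a ^ p / p + b ^ q / q) : b = a ^ (p - 1) := by
  rcases eq_or_lt_of_le ha with rfl | ha0
  · rw [Real.zero_rpow hpq.ne_zero, zero_mul, zero_div, zero_add] at h
    have hq0 : 0 < q := hpq.symm.pos
    have hbq : b ^ q = 0 := by
      rcases div_eq_zero_iff.1 h.symm with h' | h'
      · exact h'
      · exact absurd h' hq0.ne'
    have hb0 : b = 0 := by
      by_contra hb0
      exact (Real.rpow_pos_of_pos (lt_of_le_of_ne hb (Ne.symm hb0)) q).ne' hbq
    rw [hb0, Real.zero_rpow hpq.sub_one_ne_zero]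
  · set b₀ := a ^ (p - 1) with hb₀
    have hb₀0 : 0 ≤ b₀ := (Real.rpow_pos_of_pos ha0 _).le
    have hb₀q : b₀ ^ q = a ^ p := by
      rw [hb₀, ← Real.rpow_mul ha, hpq.sub_one_mul_conj]
    have hab₀ : a * b₀ = a ^ p := by
      rw [hb₀, show a * a ^ (p-1) = a ^ (1:ℝ) * a ^ (p-1) by rw [Real.rpow_one],
        ← Real.rpow_add ha0]
      congr 1; ring
    have heq₀ : a * b₀ = a ^ p / p + b₀ ^ q / q := by
      rw [hab₀, hb₀q, div_add_div _ _ hpq.ne_zero hpq.symm.ne_zero,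
        eq_div_iff (mul_ne_zero hpq.ne_zero hpq.symm.ne_zero), hpq.mul_eq_add]
      ring
    by_contra hne
    have hq1 : 1 < q := hpq.symm.lt
    have hstrict := (strictConvexOn_rpow hq1).2 (mem_Ici.2 hb) (mem_Ici.2 hb₀0) hne
      (by norm_num : (0:ℝ) < 1/2) (by norm_num : (0:ℝ) < 1/2) (by norm_num)
    simp only [smul_eq_mul] at hstrict
    set m := (1/2 : ℝ) * b + (1/2 : ℝ) * b₀ with hm
    have hm0 : 0 ≤ m := by positivity
    have hyoung := Real.young_inequality_of_nonneg ha hm0 hpq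
    have ham : a * m = a ^ p / p + (b ^ q / 2 + b₀ ^ q / 2) / q := by
      have e1 : a * m = (a * b) / 2 + (a * b₀) / 2 := by rw [hm]; ring
      rw [e1, h, heq₀]; ring
    have hlt : m ^ q < b ^ q / 2 + b₀ ^ q / 2 := by
      calc m ^ q < (1/2:ℝ) * b ^ q + (1/2:ℝ) * b₀ ^ q := hstrict
      _ = b ^ q / 2 + b₀ ^ q / 2 := by ring
    have hqpos : 0 < q := hpq.symm.pos
    have h2 : m ^ q / q < (b ^ q / 2 + b₀ ^ q / 2) / q := by gcongr
    linarith

lemma sign_abs_rpow {p : ℝ} (hp : 1 < p) (x : ℝ) :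
    Real.sign x * |x| ^ (p - 1) = |x| ^ (p - 2) * x := by
  rcases lt_trichotomy x 0 with hx | hx | hx
  · rw [Real.sign_of_neg hx]
    have hax : |x| = -x := abs_of_neg hx
    have h1 : |x| ^ (p - 1) = |x| ^ (p - 2) * |x| := by
      rw [← Real.rpow_add_one (by simp [hax]; linarith) (p - 2)]
      congr 1; ring
    rw [h1, hax]; ring
  · subst hx
    simp [Real.sign_zero, Real.zero_rpow (show p - 1 ≠ 0 by intro h; linarith [h])]
  · rw [Real.sign_of_pos hx]
    have hax : |x| = x := abs_of_pos hx
    have h1 : |x| ^ (p - 1) = |x| ^ (p - 2) * |x| := by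
      rw [← Real.rpow_add_one (by simp [hax]; exact hx.ne') (p - 2)]
      congr 1; ring
    rw [h1, hax]; ring

lemma abs_rpow_self_mul {p : ℝ} (hp : 1 < p) (x : ℝ) :
    |x| ^ (p - 2) * x * x = |x| ^ p := by
  rcases eq_or_ne x 0 with rfl | hx
  · simp [Real.zero_rpow (show p ≠ 0 by linarith)]
  · have h1 : x * x = |x| * |x| := (abs_mul_abs_self x).symm
    rw [mul_assoc, h1, ← mul_assoc, ← Real.rpow_add_one (abs_ne_zero.2 hx),
      ← Real.rpow_add_one (abs_ne_zero.2 hx)]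
    congr 1; ring

lemma abs_abs_rpow_mul {p : ℝ} (hp : 1 < p) (x : ℝ) :
    |(|x| ^ (p - 2) * x)| = |x| ^ (p - 1) := by
  rcases eq_or_ne x 0 with rfl | hx
  · simp [Real.zero_rpow (show p - 1 ≠ 0 by intro h; linarith [h])]
  · rw [abs_mul, abs_of_nonneg (Real.rpow_nonneg (abs_nonneg x) _),
      ← Real.rpow_add_one (abs_ne_zero.2 hx)]
    congr 1; ring

lemma le_of_rpow_one_div_le {x y p : ℝ} (hx : 0 ≤ x) (hy : 0 ≤ y) (hp : 0 < p)
    (h : x ^ (1/p) ≤ y ^ (1/p)) : x ≤ y := by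
  have h2 := Real.rpow_le_rpow (Real.rpow_nonneg hx _) h hp.le
  rwa [← Real.rpow_mul hx, ← Real.rpow_mul hy, one_div, inv_mul_cancel₀ hp.ne',
    Real.rpow_one, Real.rpow_one] at h2

lemma eq_one_of_rpow_one_div_eq_one {x p : ℝ} (hx : 0 ≤ x) (hp : 0 < p)
    (h : x ^ (1/p) = 1) : x = 1 := by
  have := congrArg (· ^ p) h
  simp only [Real.one_rpow] at this
  rwa [← Real.rpow_mul hx, one_div, inv_mul_cancel₀ hp.ne', Real.rpow_one] at this

lemma deriv_ineq {n : ℕ} {p : ℝ} (hp : 1 < p) (w d : Fin n → ℝ)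
    (hF : ∀ t ∈ Set.Icc (0:ℝ) 1,
      ∑ j, |w j| ^ p ≤ ∑ j, |w j + t * (d j - w j)| ^ p) :
    ∑ j, |w j| ^ p ≤ ∑ j, |w j| ^ (p - 2) * w j * d j := by
  set c : Fin n → ℝ := fun j => d j - w j with hc
  set F : ℝ → ℝ := fun t => ∑ j, |w j + t * c j| ^ p with hFdef
  set D : ℝ := ∑ j, p * |w j| ^ (p - 2) * w j * c j with hD
  have hder : HasDerivAt F D 0 := by
    apply HasDerivAt.fun_sum
    intro j _
    have hinner : HasDerivAt (fun t : ℝ => w j + t * c j) (c j) 0 := by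
      simpa using (hasDerivAt_mul_const (c j)).const_add (w j)
    have houter : HasDerivAt (fun y : ℝ => |y| ^ p)
        (p * |w j + 0 * c j| ^ (p - 2) * (w j + 0 * c j)) (w j + 0 * c j) :=
      hasDerivAt_abs_rpow _ hp
    have := houter.comp 0 hinner
    simpa [mul_assoc, mul_comm, mul_left_comm, Function.comp_def] using this
  have hD0 : 0 ≤ D := by
    have htend := hasDerivAt_iff_tendsto_slope.1 hder
    have htend' : Tendsto (slope F 0) (nhdsWithin 0 (Set.Ioi 0)) (nhds D) :=
      htend.mono_left (nhdsWithin_mono 0 (fun t ht => ne_of_gt ht))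
    refine ge_of_tendsto htend' ?_
    filter_upwards [Ioc_mem_nhdsGT zero_lt_one] with t ht
    rw [slope_def_field]
    have hF0 : F 0 = ∑ j, |w j| ^ p := by simp [hFdef]
    have h1 : F 0 ≤ F t := by rw [hF0]; exact hF t ⟨ht.1.le, ht.2⟩
    have ht0 : 0 < t := ht.1
    apply div_nonneg (by linarith) (by linarith)
  rw [hD] at hD0
  have hexp : ∀ j, p * |w j| ^ (p - 2) * w j * c j
      = p * (|w j| ^ (p - 2) * w j * d j) - p * |w j| ^ p := by
    intro j
    rw [← abs_rpow_self_mul hp (w j), hc]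
    ring
  rw [Finset.sum_congr rfl (fun j _ => hexp j), Finset.sum_sub_distrib,
    ← Finset.mul_sum, ← Finset.mul_sum, sub_nonneg] at hD0
  have hppos : (0:ℝ) < p := by linarith
  exact (mul_le_mul_iff_right₀ hppos).1 hD0



/-- **Recovery of the primal Chebyshev-center direction from the dual solution.**
For `1 < p < ∞` with conjugate `q = p/(p-1)` and `ℓ_p`-normalized gradients
`ĝ i = g i / ‖g i‖_p`, let `(v⋆, r⋆)` be optimal for the primal
`max r s.t. ĝ iᵀ v ≥ r, ‖v‖_q ≤ 1`, and let `α⋆` be optimal for the dual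
`min_{α ∈ Δᵐ} ‖∑ i, α i • ĝ i‖_p`. Set `w⋆ = ∑ i, α⋆ i • ĝ i`. If `r⋆ > 0` then
`w⋆ ≠ 0` and `v⋆ = sgn(w⋆) ⊙ |w⋆|^(p-1) / ‖w⋆‖_p^(p-1)` componentwise. -/
theorem chebyshev_primal_recovery_from_dual
    (n m : ℕ) (p q : ℝ) (hp : 1 < p) (hq : q = p / (p - 1))
    (g : Fin m → Fin n → ℝ) (hg : ∀ i, g i ≠ 0)
    (ghat : Fin m → Fin n → ℝ)
    (hghat : ∀ i, ghat i = ((∑ j, |g i j| ^ p) ^ (1 / p))⁻¹ • g i)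
    (vstar : Fin n → ℝ) (rstar : ℝ)
    -- (v⋆, r⋆) is optimal for the primal problem
    (hfeas : (∑ j, |vstar j| ^ q) ^ (1 / q) ≤ 1 ∧
      ∀ i, rstar ≤ ∑ j, ghat i j * vstar j)
    (hopt : ∀ (v : Fin n → ℝ) (r : ℝ),
      (∑ j, |v j| ^ q) ^ (1 / q) ≤ 1 → (∀ i, r ≤ ∑ j, ghat i j * v j) → r ≤ rstar)
    -- α⋆ is optimal for the dual problem
    (αstar : Fin m → ℝ) (hα : (∀ i, 0 ≤ αstar i) ∧ (∑ i, αstar i) = 1)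
    (hαopt : ∀ α : Fin m → ℝ, (∀ i, 0 ≤ α i) → (∑ i, α i) = 1 →
      (∑ j, |∑ i, αstar i * ghat i j| ^ p) ^ (1 / p) ≤
        (∑ j, |∑ i, α i * ghat i j| ^ p) ^ (1 / p))
    (wstar : Fin n → ℝ) (hw : wstar = ∑ i, αstar i • ghat i)
    (hr : 0 < rstar) :
    wstar ≠ 0 ∧
    ∀ j, vstar j = Real.sign (wstar j) * |wstar j| ^ (p - 1) /
        ((∑ k, |wstar k| ^ p) ^ (1 / p)) ^ (p - 1) := by
  have hpq : p.HolderConjugate q := (Real.holderConjugate_iff_eq_conjExponent hp).2 hq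
  have hp0 : (0:ℝ) < p := hpq.pos
  have hq0 : (0:ℝ) < q := hpq.symm.pos
  have hwj : ∀ j, wstar j = ∑ i, αstar i * ghat i j := by
    intro j; rw [hw]; simp [Finset.sum_apply]
  -- Step 1: weak duality lower bound
  set S : ℝ := ∑ j, wstar j * vstar j with hSdef
  have hrS : rstar ≤ S := by
    have hswap : S = ∑ i, αstar i * ∑ j, ghat i j * vstar j := by
      calc S = ∑ j, (∑ i, αstar i * ghat i j) * vstar j := by
              refine Finset.sum_congr rfl fun j _ => by rw [← hwj]
        _ = ∑ j, ∑ i, αstar i * (ghat i j * vstar j) := by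
              refine Finset.sum_congr rfl fun j _ => ?_
              rw [Finset.sum_mul]
              exact Finset.sum_congr rfl fun i _ => by ring
        _ = ∑ i, ∑ j, αstar i * (ghat i j * vstar j) := Finset.sum_comm
        _ = ∑ i, αstar i * ∑ j, ghat i j * vstar j := by
              refine Finset.sum_congr rfl fun i _ => by rw [Finset.mul_sum]
    have h1 : rstar = ∑ i, αstar i * rstar := by
      rw [← Finset.sum_mul, hα.2, one_mul]
    rw [h1, hswap]
    exact Finset.sum_le_sum fun i _ =>
      mul_le_mul_of_nonneg_left (hfeas.2 i) (hα.1 i)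
  -- Step 2: wstar ≠ 0
  have hwne : wstar ≠ 0 := by
    intro h0
    rw [hSdef] at hrS
    simp [h0] at hrS
    linarith
  -- Step 3: positivity of N
  set N : ℝ := (∑ k, |wstar k| ^ p) ^ (1 / p) with hNdef
  have hNp_pos : 0 < ∑ k, |wstar k| ^ p := by
    obtain ⟨k, hk⟩ := Function.ne_iff.1 hwne
    exact Finset.sum_pos' (fun j _ => Real.rpow_nonneg (abs_nonneg _) p)
      ⟨k, Finset.mem_univ k, Real.rpow_pos_of_pos (abs_pos.2 hk) p⟩
  have hN : 0 < N := Real.rpow_pos_of_pos hNp_pos _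
  have hNpow : N ^ p = ∑ k, |wstar k| ^ p := by
    rw [hNdef, ← Real.rpow_mul hNp_pos.le, one_div, inv_mul_cancel₀ hp0.ne', Real.rpow_one]
  have hNq : (N ^ (p-1)) ^ q = N ^ p := by
    rw [← Real.rpow_mul hN.le, hpq.sub_one_mul_conj]
  -- Step 4: Hölder
  set T : ℝ := ∑ j, |wstar j| * |vstar j| with hTdef
  set Vq : ℝ := (∑ j, |vstar j| ^ q) ^ (1 / q) with hVqdef
  have hST : S ≤ T :=
    Finset.sum_le_sum fun j _ => by rw [← abs_mul]; exact le_abs_self _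
  have hHold : T ≤ N * Vq := by
    have h := Real.inner_le_Lp_mul_Lq Finset.univ (fun j => |wstar j|)
      (fun j => |vstar j|) hpq
    simp only [abs_abs] at h
    exact h
  have hTN : T ≤ N := by
    calc T ≤ N * Vq := hHold
    _ ≤ N * 1 := mul_le_mul_of_nonneg_left hfeas.1 hN.le
    _ = N := mul_one N
  -- Step 5: candidate u
  set u : Fin n → ℝ := fun j => |wstar j| ^ (p - 2) * wstar j / N ^ (p - 1) with hudef
  have hu_abs : ∀ j, |u j| = |wstar j| ^ (p - 1) / N ^ (p - 1) := by
    intro j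
    rw [hudef]
    rw [abs_div, abs_abs_rpow_mul hp, abs_of_pos (Real.rpow_pos_of_pos hN _)]
  have hq_sum : ∑ j, |u j| ^ q = 1 := by
    have : ∀ j, |u j| ^ q = |wstar j| ^ p / N ^ p := by
      intro j
      rw [hu_abs j, Real.div_rpow (Real.rpow_nonneg (abs_nonneg _) _)
        (Real.rpow_nonneg hN.le _), ← Real.rpow_mul (abs_nonneg _),
        hpq.sub_one_mul_conj, hNq]
    rw [Finset.sum_congr rfl fun j _ => this j, ← Finset.sum_div, ← hNpow,
      div_self (by positivity)]
  have hfeas_u : ∀ i, N ≤ ∑ j, ghat i j * u j := by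
    intro i
    have hkey : ∑ j, |wstar j| ^ p ≤ ∑ j, |wstar j| ^ (p - 2) * wstar j * ghat i j := by
      apply deriv_ineq hp
      intro t ht
      set α : Fin m → ℝ := fun i' => (1 - t) * αstar i' + t * (if i' = i then 1 else 0)
        with hαdef
      have hαnn : ∀ i', 0 ≤ α i' := fun i' => add_nonneg
        (mul_nonneg (by linarith [ht.2]) (hα.1 i'))
        (mul_nonneg ht.1 (by positivity))
      have hαsum : ∑ i', α i' = 1 := by
        rw [hαdef]
        rw [Finset.sum_add_distrib, ← Finset.mul_sum, ← Finset.mul_sum, hα.2,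
          Finset.sum_ite_eq' Finset.univ i (fun _ => (1:ℝ))]
        simp
      have hcomb : ∀ j, ∑ i', α i' * ghat i' j = wstar j + t * (ghat i j - wstar j) := by
        intro j
        rw [hαdef]
        have : ∀ i', ((1 - t) * αstar i' + t * (if i' = i then 1 else 0)) * ghat i' j
            = (1 - t) * (αstar i' * ghat i' j) + t * ((if i' = i then 1 else 0) * ghat i' j) := by
          intro i'; ring
        rw [Finset.sum_congr rfl fun i' _ => this i', Finset.sum_add_distrib,
          ← Finset.mul_sum, ← Finset.mul_sum, ← hwj j]
        have hite : ∑ i', (if i' = i then (1:ℝ) else 0) * ghat i' j = ghat i j := by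
          simp
        rw [hite]; ring
      have := hαopt α hαnn hαsum
      have hle := le_of_rpow_one_div_le
        (Finset.sum_nonneg fun j _ => Real.rpow_nonneg (abs_nonneg _) _)
        (Finset.sum_nonneg fun j _ => Real.rpow_nonneg (abs_nonneg _) _) hp0 this
      calc ∑ j, |wstar j| ^ p = ∑ j, |∑ i', αstar i' * ghat i' j| ^ p := by
            refine Finset.sum_congr rfl fun j _ => by rw [← hwj]
      _ ≤ ∑ j, |∑ i', α i' * ghat i' j| ^ p := hle
      _ = ∑ j, |wstar j + t * (ghat i j - wstar j)| ^ p := by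
            refine Finset.sum_congr rfl fun j _ => by rw [hcomb]
    have hsum_u : ∑ j, ghat i j * u j
        = (∑ j, |wstar j| ^ (p - 2) * wstar j * ghat i j) / N ^ (p - 1) := by
      rw [Finset.sum_div]
      refine Finset.sum_congr rfl fun j _ => by rw [hudef]; ring
    rw [hsum_u, le_div_iff₀ (Real.rpow_pos_of_pos hN _)]
    calc N * N ^ (p - 1) = N ^ p := by
          nth_rewrite 1 [← Real.rpow_one N]
          rw [← Real.rpow_add hN]
          congr 1; ring
    _ = ∑ j, |wstar j| ^ p := hNpow
    _ ≤ ∑ j, |wstar j| ^ (p - 2) * wstar j * ghat i j := hkey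
  -- Step 6: strong duality
  have hNr : N ≤ rstar := by
    apply hopt u N
    · rw [show ∑ j, |u j| ^ q = 1 from hq_sum, Real.one_rpow]
    · exact hfeas_u
  -- Step 7: equality chain
  have hSN : S = N := le_antisymm (hST.trans hTN) ((hNr.trans hrS))
  have hTN' : T = N := le_antisymm hTN (hSN ▸ hST)
  have hVq1 : Vq = 1 := by
    have h1 : N * Vq ≤ N * 1 := mul_le_mul_of_nonneg_left hfeas.1 hN.le
    have h2 : N ≤ N * Vq := hTN' ▸ hHold
    have : N * Vq = N * 1 := le_antisymm h1 (by rwa [mul_one])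
    exact mul_left_cancel₀ hN.ne' this
  have hVsum : ∑ j, |vstar j| ^ q = 1 :=
    eq_one_of_rpow_one_div_eq_one
      (Finset.sum_nonneg fun j _ => Real.rpow_nonneg (abs_nonneg _) _) hq0 hVq1
  -- Step 8a: pointwise sign condition
  have hsign : ∀ j, wstar j * vstar j = |wstar j| * |vstar j| := by
    have heq : S = T := hSN.trans hTN'.symm
    have := (Finset.sum_eq_sum_iff_of_le
      (fun j (_ : j ∈ Finset.univ) => by
        rw [← abs_mul]; exact le_abs_self (wstar j * vstar j))).1 heq
    intro j
    exact this j (Finset.mem_univ j)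
  -- Step 8b: Young pointwise
  have habs_v : ∀ j, |vstar j| = |wstar j| ^ (p - 1) / N ^ (p - 1) := by
    have hterm : ∀ j ∈ Finset.univ, (|wstar j| / N) * |vstar j|
        ≤ (|wstar j| / N) ^ p / p + |vstar j| ^ q / q :=
      fun j _ => Real.young_inequality_of_nonneg
        (div_nonneg (abs_nonneg _) hN.le) (abs_nonneg _) hpq
    have hsum_lhs : ∑ j, (|wstar j| / N) * |vstar j| = 1 := by
      have : ∑ j, (|wstar j| / N) * |vstar j| = T / N := by
        rw [hTdef, Finset.sum_div]
        exact Finset.sum_congr rfl fun j _ => by ring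
      rw [this, hTN', div_self hN.ne']
    have hsum_rhs : ∑ j, ((|wstar j| / N) ^ p / p + |vstar j| ^ q / q) = 1 := by
      rw [Finset.sum_add_distrib, ← Finset.sum_div, ← Finset.sum_div]
      have h1 : ∑ j, (|wstar j| / N) ^ p = 1 := by
        have : ∀ j, (|wstar j| / N) ^ p = |wstar j| ^ p / N ^ p := fun j =>
          Real.div_rpow (abs_nonneg _) hN.le p
        rw [Finset.sum_congr rfl fun j _ => this j, ← Finset.sum_div, ← hNpow,
          div_self (by positivity)]
      rw [h1, hVsum, one_div, one_div, hpq.inv_add_inv_eq_one]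
    have heq : ∑ j, (|wstar j| / N) * |vstar j|
        = ∑ j, ((|wstar j| / N) ^ p / p + |vstar j| ^ q / q) := by
      rw [hsum_lhs, hsum_rhs]
    have hpt := (Finset.sum_eq_sum_iff_of_le hterm).1 heq
    intro j
    have := young_eq hpq (div_nonneg (abs_nonneg _) hN.le) (abs_nonneg _)
      (hpt j (Finset.mem_univ j))
    rw [this, Real.div_rpow (abs_nonneg _) hN.le]
  -- conclusion
  refine ⟨hwne, fun j => ?_⟩
  rcases lt_trichotomy (wstar j) 0 with hwj0 | hwj0 | hwj0
  · have h1 := hsign j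
    rw [abs_of_neg hwj0] at h1
    have h2 : vstar j = -|vstar j| := by
      have := mul_left_cancel₀ (ne_of_lt hwj0) (by linarith [h1] : wstar j * vstar j = wstar j * (-|vstar j|))
      exact this
    rw [h2, habs_v j, Real.sign_of_neg hwj0]
    ring
  · have h1 : |vstar j| = 0 := by
      rw [habs_v j, hwj0, abs_zero, Real.zero_rpow hpq.sub_one_ne_zero, zero_div]
    rw [abs_eq_zero.1 h1, hwj0, Real.sign_zero]
    simp
  · have h1 := hsign j
    rw [abs_of_pos hwj0] at h1
    have h2 : vstar j = |vstar j| :=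
      mul_left_cancel₀ (ne_of_gt hwj0) h1
    rw [h2, habs_v j, Real.sign_of_pos hwj0]
    ring
end

section
/- In the Euclidean case p = q = 2, if r* > 0 then the primal Chebyshev-center direction is recovered from the dual aggregate w* = Σ α*_i ĝ_i by v* = w*/‖w*‖_2, and it satisfies ĝ_i^T v* ≥ ‖w*‖_2 for all i. -/
open scoped RealInnerProductSpace

/-- **Euclidean recovery of the Chebyshev-center direction.**
In the case `p = q = 2`, with `ĝ i = g i / ‖g i‖₂` and `α⋆` optimal for the dual
`min_{α ∈ Δᵐ} ‖∑ i, α i • ĝ i‖₂`, if `r⋆ = ‖w⋆‖₂ > 0` where `w⋆ = ∑ i, α⋆ i • ĝ i`,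
then `v⋆ = w⋆ / ‖w⋆‖₂` satisfies `ĝ iᵀ v⋆ ≥ ‖w⋆‖₂` for all `i`, and `v⋆` is optimal for
the primal problem `max r s.t. ĝ iᵀ v ≥ r, ‖v‖₂ ≤ 1` with optimal value `‖w⋆‖₂`. -/
theorem chebyshev_recovery_euclidean
    (n m : ℕ) (g : Fin m → EuclideanSpace ℝ (Fin n)) (hg : ∀ i, g i ≠ 0)
    (ghat : Fin m → EuclideanSpace ℝ (Fin n)) (hghat : ∀ i, ghat i = ‖g i‖⁻¹ • g i)
    (αstar : Fin m → ℝ) (hα : (∀ i, 0 ≤ αstar i) ∧ (∑ i, αstar i) = 1)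
    (hαopt : ∀ α : Fin m → ℝ, (∀ i, 0 ≤ α i) → (∑ i, α i) = 1 →
      ‖∑ i, αstar i • ghat i‖ ≤ ‖∑ i, α i • ghat i‖)
    (wstar : EuclideanSpace ℝ (Fin n)) (hw : wstar = ∑ i, αstar i • ghat i)
    (hr : 0 < ‖wstar‖)
    (vstar : EuclideanSpace ℝ (Fin n)) (hv : vstar = ‖wstar‖⁻¹ • wstar) :
    (∀ i, ‖wstar‖ ≤ ⟪ghat i, vstar⟫) ∧
    IsGreatest {r : ℝ | ∃ v : EuclideanSpace ℝ (Fin n), ‖v‖ ≤ 1 ∧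
        ∀ i, r ≤ ⟪ghat i, v⟫} ‖wstar‖ := by
  have hα0 := hα.1
  have hα1 := hα.2
  -- Key variational inequality: ⟪wstar, ghat i⟫ ≥ ‖wstar‖²
  have key : ∀ i, ‖wstar‖ ^ 2 ≤ ⟪wstar, ghat i⟫ := by
    intro i
    by_contra hcon
    push_neg at hcon
    set c : ℝ := ⟪wstar, ghat i⟫ - ‖wstar‖ ^ 2 with hcdef
    have hc : c < 0 := sub_neg.mpr hcon
    set D : ℝ := ‖ghat i - wstar‖ ^ 2 with hDdef
    have hD : 0 ≤ D := by positivity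
    set t : ℝ := min 1 (-c / (D + 1)) with htdef
    have ht0 : 0 < t := by
      apply lt_min one_pos
      apply div_pos (by linarith) (by linarith)
    have ht1 : t ≤ 1 := min_le_left _ _
    have htD : t * D < -c := by
      have h1 : t * D ≤ (-c / (D + 1)) * D := by
        apply mul_le_mul_of_nonneg_right (min_le_right _ _) hD
      have h2 : (-c / (D + 1)) * D < -c := by
        rw [div_mul_eq_mul_div, div_lt_iff₀ (by linarith)]
        nlinarith
      linarith
    -- the perturbed simplex point
    set α : Fin m → ℝ := fun j => (1 - t) * αstar j + t * (if j = i then 1 else 0) with hαdef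
    have hα0' : ∀ j, 0 ≤ α j := by
      intro j
      have h1 := hα0 j
      rcases eq_or_ne j i with h | h
      · subst h
        simp only [hαdef, if_pos rfl, if_true, mul_one]
        nlinarith [ht0.le, ht1]
      · simp only [hαdef, if_neg h, mul_zero, add_zero]
        nlinarith [ht0.le, ht1]
    have hα1' : (∑ j, α j) = 1 := by
      simp only [hαdef]
      rw [Finset.sum_add_distrib, ← Finset.mul_sum, ← Finset.mul_sum, hα1]
      simp
    have hsum : (∑ j, α j • ghat j) = wstar + t • (ghat i - wstar) := by
      simp only [hαdef, add_smul, mul_smul]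
      rw [Finset.sum_add_distrib, ← Finset.smul_sum, ← Finset.smul_sum, ← hw]
      have : (∑ j, (if j = i then (1:ℝ) else 0) • ghat j) = ghat i := by
        rw [Finset.sum_eq_single i, if_pos rfl, one_smul]
        · intro b _ hb; rw [if_neg hb, zero_smul]
        · intro hni; exact absurd (Finset.mem_univ i) hni
      rw [this, smul_sub, sub_smul, one_smul]
      abel
    have hineq := hαopt α hα0' hα1'
    rw [← hw, hsum] at hineq
    have hsq : ‖wstar‖ ^ 2 ≤ ‖wstar + t • (ghat i - wstar)‖ ^ 2 := by
      apply pow_le_pow_left₀ (norm_nonneg _) hineq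
    rw [norm_add_sq_real] at hsq
    have hin : ⟪wstar, t • (ghat i - wstar)⟫ = t * c := by
      rw [real_inner_smul_right, inner_sub_right, real_inner_self_eq_norm_sq, hcdef]
    have hns : ‖t • (ghat i - wstar)‖ ^ 2 = t ^ 2 * D := by
      rw [norm_smul, mul_pow, Real.norm_eq_abs, sq_abs, hDdef]
    rw [hin, hns] at hsq
    nlinarith
  have hfirst : ∀ i, ‖wstar‖ ≤ ⟪ghat i, vstar⟫ := by
    intro i
    rw [hv, real_inner_smul_right, real_inner_comm]
    have := key i
    rw [← mul_le_mul_iff_right₀ (show (0:ℝ) < ‖wstar‖⁻¹ by positivity)] at this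
    calc ‖wstar‖ = ‖wstar‖⁻¹ * ‖wstar‖ ^ 2 := by
            rw [sq, inv_mul_cancel_left₀ hr.ne']
      _ ≤ ‖wstar‖⁻¹ * ⟪wstar, ghat i⟫ := this
  refine ⟨hfirst, ⟨⟨vstar, ?_, hfirst⟩, ?_⟩⟩
  · rw [hv, norm_smul, Real.norm_eq_abs, abs_of_pos (inv_pos.mpr hr),
      inv_mul_cancel₀ hr.ne']
  · rintro r ⟨v, hv1, hrv⟩
    have h1 : r = ∑ j, αstar j * r := by
      rw [← Finset.sum_mul, hα1, one_mul]
    have h2 : (∑ j, αstar j * r) ≤ ∑ j, αstar j * ⟪ghat j, v⟫ := by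
      apply Finset.sum_le_sum
      intro j _
      exact mul_le_mul_of_nonneg_left (hrv j) (hα0 j)
    have h3 : (∑ j, αstar j * ⟪ghat j, v⟫) = ⟪wstar, v⟫ := by
      rw [hw, sum_inner]
      refine Finset.sum_congr rfl fun j _ => ?_
      rw [real_inner_smul_left]
    have h4 : ⟪wstar, v⟫ ≤ ‖wstar‖ := by
      calc ⟪wstar, v⟫ ≤ ‖wstar‖ * ‖v‖ := real_inner_le_norm _ _
        _ ≤ ‖wstar‖ * 1 := by apply mul_le_mul_of_nonneg_left hv1 (norm_nonneg _)
        _ = ‖wstar‖ := mul_one _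
    linarith
end

section
/- Let L_1,...,L_m be differentiable with total loss L = Σ L_i β-smooth w.r.t. the ℓ_q norm, and suppose at each iterate θ_t all gradients g_i(θ_t) are nonzero and the Chebyshev-center radius satisfies r_t* > ε. With update θ_{t+1} = θ_t - (1/β) d_t, where d_t = (Σ_i g_i(θ_t)^T v_t) v_t and v_t is the optimal ℓ_q-unit Chebyshev direction, we have min_{0≤t≤T-1} ‖∇L(θ_t)‖_p² ≤ 2β(L(θ_0) - L(θ*))/(ε² T), where L(θ*) ≤ L(θ_t) for all t. -/
lemma lp_scale {n : ℕ} {q : ℝ} (hq : 0 < q) (c : ℝ) (w : Fin n → ℝ) :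
    (∑ j, |c * w j| ^ q) ^ (1/q) = |c| * (∑ j, |w j| ^ q) ^ (1/q) := by
  have h1 : ∀ j, |c * w j| ^ q = |c| ^ q * |w j| ^ q := fun j => by
    rw [abs_mul, Real.mul_rpow (abs_nonneg _) (abs_nonneg _)]
  simp_rw [h1, ← Finset.mul_sum]
  rw [Real.mul_rpow (by positivity) (by positivity),
    ← Real.rpow_mul (abs_nonneg c), mul_one_div_cancel hq.ne', Real.rpow_one]

lemma minkowski_fin {ι : Type*} {n : ℕ} {p : ℝ} (hp : 1 ≤ p) (s : Finset ι)
    (f : ι → Fin n → ℝ) :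
    (∑ j, |∑ i ∈ s, f i j| ^ p) ^ (1/p) ≤ ∑ i ∈ s, (∑ j, |f i j| ^ p) ^ (1/p) := by
  have hp0 : p ≠ 0 := by linarith
  induction s using Finset.cons_induction with
  | empty =>
      simp only [Finset.sum_empty, abs_zero, Real.zero_rpow hp0, Finset.sum_const_zero]
      rw [Real.zero_rpow (by simp [hp0])]
  | cons a s ha ih =>
      simp only [Finset.sum_cons]
      calc (∑ j, |f a j + ∑ i ∈ s, f i j| ^ p) ^ (1/p)
          ≤ (∑ j, |f a j| ^ p) ^ (1/p) + (∑ j, |∑ i ∈ s, f i j| ^ p) ^ (1/p) :=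
            Real.Lp_add_le _ _ _ hp
        _ ≤ _ := by linarith

lemma lp_pos {n : ℕ} {p : ℝ} (hp : 0 < p) {w : Fin n → ℝ} (hw : w ≠ 0) :
    0 < (∑ j, |w j| ^ p) ^ (1/p) := by
  obtain ⟨k, hk⟩ : ∃ k, w k ≠ 0 := by
    by_contra h; push_neg at h; exact hw (funext h)
  have h1 : (0:ℝ) < |w k| ^ p := Real.rpow_pos_of_pos (abs_pos.2 hk) p
  have h2 : |w k| ^ p ≤ ∑ j, |w j| ^ p :=
    Finset.single_le_sum (f := fun j => |w j| ^ p) (fun j _ => by positivity)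
      (Finset.mem_univ k)
  exact Real.rpow_pos_of_pos (lt_of_lt_of_le h1 h2) _

/-- **Convergence of the DualChebyshev method.**
Let `L i` be differentiable with `β`-smooth total loss `L = ∑ i, L i` w.r.t. the `ℓ_q`
norm, `1 < p < ∞`, `q = p/(p-1)`. Suppose at each iterate `θ t` all gradients are
nonzero and the Chebyshev radius `r t` exceeds `ε`, `v t` is the optimal `ℓ_q`-unit
Chebyshev direction, and `θ (t+1) = θ t - (1/β) • d t` with
`d t = (∑ i, g i (θ t)ᵀ v t) • v t`. If `L θstar ≤ L (θ t)` for all `t`, then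
`min_{0 ≤ t ≤ T-1} ‖∇L(θ t)‖_p² ≤ 2β (L (θ 0) - L θstar) / (ε² T)`. -/
theorem dual_chebyshev_convergence
    (n m : ℕ) (p q : ℝ) (hp : 1 < p) (hq : q = p / (p - 1))
    (β ε : ℝ) (hβ : 0 < β) (hε : 0 < ε)
    (L : Fin m → (Fin n → ℝ) → ℝ) (hdiff : ∀ i, Differentiable ℝ (L i))
    (Ltot : (Fin n → ℝ) → ℝ) (hLtot : ∀ x, Ltot x = ∑ i, L i x)
    (hsmooth : ∀ θ θ' : Fin n → ℝ,
      Ltot θ' ≤ Ltot θ + fderiv ℝ Ltot θ (θ' - θ) +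
        β / 2 * ((∑ j, |θ' j - θ j| ^ q) ^ (1 / q)) ^ 2)
    (T : ℕ) (hT : 0 < T)
    (θ : ℕ → (Fin n → ℝ)) (θstar : Fin n → ℝ)
    (hlow : ∀ t, Ltot θstar ≤ Ltot (θ t))
    (g : Fin m → ℕ → Fin n → ℝ)
    (hgrad : ∀ i t j, g i t j = fderiv ℝ (L i) (θ t) (Pi.single j 1))
    (hgnz : ∀ i t, g i t ≠ 0)
    (r : ℕ → ℝ) (v : ℕ → Fin n → ℝ)
    -- `(v t, r t)` is optimal for the Chebyshev-center problem at `θ t`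
    (hvfeas : ∀ t, (∑ j, |v t j| ^ q) ^ (1 / q) ≤ 1 ∧
      ∀ i, r t ≤ ∑ j, (((∑ k, |g i t k| ^ p) ^ (1 / p))⁻¹ * g i t j) * v t j)
    (hvopt : ∀ t (v' : Fin n → ℝ) (r' : ℝ),
      (∑ j, |v' j| ^ q) ^ (1 / q) ≤ 1 →
      (∀ i, r' ≤ ∑ j, (((∑ k, |g i t k| ^ p) ^ (1 / p))⁻¹ * g i t j) * v' j) →
      r' ≤ r t)
    (hrε : ∀ t, ε < r t)
    (d : ℕ → Fin n → ℝ)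
    (hd : ∀ t, d t = (∑ i, ∑ j, g i t j * v t j) • v t)
    (hupd : ∀ t, θ (t + 1) = θ t - (1 / β) • d t) :
    ∃ t < T,
      ((∑ j, |fderiv ℝ Ltot (θ t) (Pi.single j 1)| ^ p) ^ (1 / p)) ^ 2 ≤
        2 * β * (Ltot (θ 0) - Ltot θstar) / (ε ^ 2 * T) := by
  have hp1 : (1:ℝ) ≤ p := hp.le
  have hq0 : 0 < q := by
    rw [hq]; exact div_pos (by linarith) (by linarith)
  set G : ℕ → Fin n → ℝ := fun t j => ∑ i, g i t j with hGdef
  set S : ℕ → ℝ := fun t => ∑ j, G t j * v t j with hSdef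
  set Np : ℕ → ℝ := fun t => (∑ j, |G t j| ^ p) ^ (1/p) with hNpdef
  -- differentiability and derivative facts
  have hLe : Ltot = fun x => ∑ i, L i x := funext hLtot
  have hfder : ∀ t (w : Fin n → ℝ),
      fderiv ℝ Ltot (θ t) w = ∑ i, fderiv ℝ (L i) (θ t) w := by
    intro t w
    rw [hLe, fderiv_fun_sum (fun i _ => (hdiff i).differentiableAt)]
    simp [ContinuousLinearMap.sum_apply]
  have hDj : ∀ t j, fderiv ℝ Ltot (θ t) (Pi.single j 1) = G t j := by
    intro t j
    rw [hfder]
    exact Finset.sum_congr rfl (fun i _ => (hgrad i t j).symm)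
  have hlin : ∀ t (w : Fin n → ℝ), fderiv ℝ Ltot (θ t) w = ∑ j, w j * G t j := by
    intro t w
    have hw : ∑ j, w j • (Pi.single j 1 : Fin n → ℝ) = w := by
      simp_rw [← Pi.single_smul, smul_eq_mul, mul_one, Finset.univ_sum_single]
    conv_lhs => rw [← hw]
    rw [map_sum]
    exact Finset.sum_congr rfl (fun j _ => by rw [map_smul, hDj, smul_eq_mul])
  -- feasibility facts
  have hNg : ∀ i t, 0 < (∑ k, |g i t k| ^ p) ^ (1/p) :=
    fun i t => lp_pos (by linarith) (hgnz i t)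
  have hfeas : ∀ t i, r t * (∑ k, |g i t k| ^ p) ^ (1/p) ≤ ∑ j, g i t j * v t j := by
    intro t i
    have h := (hvfeas t).2 i
    have heq : ∑ j, (((∑ k, |g i t k| ^ p) ^ (1 / p))⁻¹ * g i t j) * v t j
        = (∑ j, g i t j * v t j) / ((∑ k, |g i t k| ^ p) ^ (1 / p)) := by
      rw [Finset.sum_div]
      exact Finset.sum_congr rfl (fun j _ => by rw [div_eq_mul_inv]; ring)
    rw [heq, le_div_iff₀ (hNg i t)] at h
    exact h
  have hS_eq : ∀ t, (∑ i, ∑ j, g i t j * v t j) = S t := by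
    intro t
    rw [hSdef, Finset.sum_comm]
    exact Finset.sum_congr rfl (fun j _ => by rw [hGdef, Finset.sum_mul])
  have hNp_nonneg : ∀ t, 0 ≤ Np t := fun t => by rw [hNpdef]; positivity
  have hSge : ∀ t, ε * Np t ≤ S t := by
    intro t
    have hmink : Np t ≤ ∑ i, (∑ k, |g i t k| ^ p) ^ (1/p) :=
      minkowski_fin hp1 Finset.univ (fun i k => g i t k)
    have hsumNg : (0:ℝ) ≤ ∑ i, (∑ k, |g i t k| ^ p) ^ (1/p) :=
      Finset.sum_nonneg (fun i _ => (hNg i t).le)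
    calc ε * Np t ≤ ε * ∑ i, (∑ k, |g i t k| ^ p) ^ (1/p) := by
          exact mul_le_mul_of_nonneg_left hmink hε.le
      _ ≤ r t * ∑ i, (∑ k, |g i t k| ^ p) ^ (1/p) :=
          mul_le_mul_of_nonneg_right (hrε t).le hsumNg
      _ = ∑ i, r t * (∑ k, |g i t k| ^ p) ^ (1/p) := Finset.mul_sum _ _ _
      _ ≤ ∑ i, ∑ j, g i t j * v t j := Finset.sum_le_sum (fun i _ => hfeas t i)
      _ = S t := hS_eq t
  have hS_nonneg : ∀ t, 0 ≤ S t := fun t =>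
    le_trans (by positivity) (hSge t)
  -- descent
  have hdescent : ∀ t, Ltot (θ (t+1)) + S t ^ 2 / (2*β) ≤ Ltot (θ t) := by
    intro t
    have h := hsmooth (θ t) (θ (t+1))
    have hΔθ : θ (t+1) - θ t = (-(1/β * S t)) • v t := by
      rw [hupd t, hd t, hS_eq t, smul_smul, sub_sub_cancel_left, ← neg_smul]
    have hsm : ∀ c : ℝ, ∑ j, (c • v t) j * G t j = c * S t := by
      intro c
      rw [hSdef]
      simp only [Pi.smul_apply, smul_eq_mul]
      rw [Finset.mul_sum]
      exact Finset.sum_congr rfl (fun j _ => by ring)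
    have hflin : fderiv ℝ Ltot (θ t) (θ (t+1) - θ t) = -(S t ^ 2 / β) := by
      rw [hΔθ, hlin t, hsm]
      ring
    have habs : ∀ j, θ (t+1) j - θ t j = (-(1/β * S t)) * v t j := by
      intro j
      have := congrFun hΔθ j
      simpa using this
    have hnorm : (∑ j, |θ (t+1) j - θ t j| ^ q) ^ (1/q) ≤ S t / β := by
      simp_rw [habs]
      rw [lp_scale hq0]
      have h1 : |(-(1/β * S t))| = S t / β := by
        rw [abs_neg, abs_of_nonneg (mul_nonneg (by positivity) (hS_nonneg t))]
        ring
      rw [h1]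
      have hv := (hvfeas t).1
      have h0 : (0:ℝ) ≤ S t / β := div_nonneg (hS_nonneg t) hβ.le
      calc S t / β * (∑ j, |v t j| ^ q) ^ (1/q) ≤ S t / β * 1 :=
            mul_le_mul_of_nonneg_left hv h0
        _ = S t / β := mul_one _
    have hN0 : (0:ℝ) ≤ (∑ j, |θ (t+1) j - θ t j| ^ q) ^ (1/q) := by positivity
    have hsq : ((∑ j, |θ (t+1) j - θ t j| ^ q) ^ (1/q)) ^ 2 ≤ (S t / β) ^ 2 :=
      pow_le_pow_left₀ hN0 hnorm 2
    have heq1 : β / 2 * (S t / β) ^ 2 = S t ^ 2 / (2*β) := by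
      field_simp
    have heq2 : S t ^ 2 / β = S t ^ 2 / (2*β) + S t ^ 2 / (2*β) := by
      field_simp
      ring
    have hb2 : (0:ℝ) ≤ β / 2 := by positivity
    have := mul_le_mul_of_nonneg_left hsq hb2
    rw [hflin] at h
    linarith
  -- telescoping
  have htel : ∀ N, Ltot (θ N) + (∑ t ∈ Finset.range N, S t ^ 2 / (2*β)) ≤ Ltot (θ 0) := by
    intro N
    induction N with
    | zero => simp
    | succ N ih =>
        rw [Finset.sum_range_succ]
        have := hdescent N
        linarith
  -- conclusion by contradiction
  by_contra hcon
  push_neg at hcon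
  have hT' : (0:ℝ) < T := by exact_mod_cast hT
  have hkey : ∀ t < T, (Ltot (θ 0) - Ltot θstar) / T < S t ^ 2 / (2*β) := by
    intro t ht
    have h1 := hcon t ht
    simp only [hDj] at h1
    have hε0 : ε ≠ 0 := hε.ne'
    have hT0 : (T:ℝ) ≠ 0 := hT'.ne'
    have key : 2*β*(Ltot (θ 0) - Ltot θstar)/(T:ℝ) < S t ^ 2 := by
      calc 2*β*(Ltot (θ 0) - Ltot θstar)/(T:ℝ)
          = ε ^ 2 * (2*β*(Ltot (θ 0) - Ltot θstar)/(ε ^ 2 * (T:ℝ))) := by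
            field_simp
        _ < ε ^ 2 * Np t ^ 2 :=
            mul_lt_mul_of_pos_left h1 (pow_pos hε 2)
        _ ≤ S t ^ 2 := by
            rw [← mul_pow]
            exact pow_le_pow_left₀ (mul_nonneg hε.le (hNp_nonneg t)) (hSge t) 2
    rw [div_lt_div_iff₀ hT' (by positivity : (0:ℝ) < 2*β)]
    have key2 : 2*β*(Ltot (θ 0) - Ltot θstar) < S t ^ 2 * T := (div_lt_iff₀ hT').mp key
    linarith
  have hsum : Ltot (θ 0) - Ltot θstar < ∑ t ∈ Finset.range T, S t ^ 2 / (2*β) := by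
    have hlt := Finset.sum_lt_sum_of_nonempty (s := Finset.range T)
      (Finset.nonempty_range_iff.mpr hT.ne') (f := fun t => (Ltot (θ 0) - Ltot θstar) / T)
      (fun t ht => hkey t (Finset.mem_range.mp ht))
    have hconst : ∑ _t ∈ Finset.range T, (Ltot (θ 0) - Ltot θstar) / (T:ℝ)
        = Ltot (θ 0) - Ltot θstar := by
      rw [Finset.sum_const, Finset.card_range, nsmul_eq_mul, mul_comm,
        div_mul_cancel₀ _ hT'.ne']
    rw [hconst] at hlt
    exact hlt
  have := htel T
  have := hlow T
  linarith
end

section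
/- Let ĝ_1,...,ĝ_m ∈ R^n be unit vectors and suppose the system ĝ_i^T w = 1 (i = 1,...,m) is feasible. Then the equality-constrained problem max_{v,r} r subject to ĝ_i^T v = r for all i and ‖v‖_2 ≤ 1 has optimal value r̃ = 1/‖w*‖_2 and optimal direction ṽ = w*/‖w*‖_2, where w* is the minimum ℓ_2-norm solution of Ĝ^T w = 1_m with Ĝ = [ĝ_1,...,ĝ_m]. -/
open scoped RealInnerProductSpace

/-- **Equivalence of the equality-constrained Chebyshev problem with the ConFIG
minimum-norm system.** Let `ĝ i` be unit vectors such that the system `ĝ iᵀ w = 1`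
is feasible, and let `w⋆` be its minimum `ℓ₂`-norm solution. Then the problem
`max r s.t. ĝ iᵀ v = r (∀ i), ‖v‖₂ ≤ 1` has optimal value `r̃ = 1/‖w⋆‖₂`, attained at
the direction `ṽ = w⋆/‖w⋆‖₂`. -/
theorem config_equivalence_min_norm
    (n m : ℕ) (hm : 0 < m)
    (ghat : Fin m → EuclideanSpace ℝ (Fin n)) (hunit : ∀ i, ‖ghat i‖ = 1)
    (wstar : EuclideanSpace ℝ (Fin n))
    (hsol : ∀ i, ⟪ghat i, wstar⟫ = 1)
    (hmin : ∀ w : EuclideanSpace ℝ (Fin n), (∀ i, ⟪ghat i, w⟫ = 1) → ‖wstar‖ ≤ ‖w‖) :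
    IsGreatest {r : ℝ | ∃ v : EuclideanSpace ℝ (Fin n), ‖v‖ ≤ 1 ∧
        ∀ i, ⟪ghat i, v⟫ = r} (1 / ‖wstar‖) ∧
    (‖(‖wstar‖⁻¹ • wstar : EuclideanSpace ℝ (Fin n))‖ ≤ 1 ∧
      ∀ i, ⟪ghat i, (‖wstar‖⁻¹ • wstar : EuclideanSpace ℝ (Fin n))⟫ = 1 / ‖wstar‖) := by

  have i0 : Fin m := ⟨0, hm⟩
  have hw1 : (1:ℝ) ≤ ‖wstar‖ := by
    have h := abs_real_inner_le_norm (ghat i0) wstar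
    rw [hsol i0, hunit i0, one_mul] at h
    simpa using h
  have hwpos : 0 < ‖wstar‖ := lt_of_lt_of_le one_pos hw1
  have hwne : ‖wstar‖ ≠ 0 := ne_of_gt hwpos
  have hnorm : ‖(‖wstar‖⁻¹ • wstar : EuclideanSpace ℝ (Fin n))‖ ≤ 1 := by
    rw [norm_smul, norm_inv, norm_norm, inv_mul_cancel₀ hwne]
  have hinner : ∀ i, ⟪ghat i, (‖wstar‖⁻¹ • wstar : EuclideanSpace ℝ (Fin n))⟫ = 1 / ‖wstar‖ := by
    intro i
    rw [real_inner_smul_right, hsol i, mul_one, one_div]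
  refine ⟨⟨⟨_, hnorm, hinner⟩, ?_⟩, hnorm, hinner⟩
  rintro r ⟨v, hv1, hvr⟩
  rcases le_or_gt r 0 with hr | hr
  · exact hr.trans (le_of_lt (by positivity))
  · have hw : ∀ i, ⟪ghat i, (r⁻¹ • v : EuclideanSpace ℝ (Fin n))⟫ = 1 := by
      intro i
      rw [real_inner_smul_right, hvr i, inv_mul_cancel₀ (ne_of_gt hr)]
    have := hmin _ hw
    rw [norm_smul, norm_inv, Real.norm_eq_abs, abs_of_pos hr] at this
    have h2 : ‖wstar‖ ≤ r⁻¹ := this.trans (by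
      calc r⁻¹ * ‖v‖ ≤ r⁻¹ * 1 := by
            exact mul_le_mul_of_nonneg_left hv1 (le_of_lt (inv_pos.mpr hr))
        _ = r⁻¹ := mul_one _)
    rw [one_div]
    rwa [le_inv_comm₀ hwpos hr] at h2
end

section
/- For m = 2 with unit ℓ_2 vectors ĝ_1 ≠ -ĝ_2, the Chebyshev-center problem max r s.t. ĝ_1^T v ≥ r, ĝ_2^T v ≥ r, ‖v‖_2 ≤ 1 has optimal direction v* = (ĝ_1 + ĝ_2)/‖ĝ_1 + ĝ_2‖_2, the normalized angle bisector, with optimal value r* = (1 + ĝ_1^T ĝ_2)/‖ĝ_1 + ĝ_2‖_2, and both constraints are active at the optimum. -/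
open scoped RealInnerProductSpace

/-- **Two-objective Chebyshev center is the angle bisector.**
For unit `ℓ₂` vectors `ĝ₁ ≠ -ĝ₂`, the problem
`max r s.t. ĝ₁ᵀ v ≥ r, ĝ₂ᵀ v ≥ r, ‖v‖₂ ≤ 1` has optimal direction
`v⋆ = (ĝ₁ + ĝ₂)/‖ĝ₁ + ĝ₂‖₂` with optimal value `r⋆ = (1 + ĝ₁ᵀĝ₂)/‖ĝ₁ + ĝ₂‖₂`,
and both constraints are active at the optimum. -/
theorem two_objective_chebyshev_is_bisector
    (n : ℕ) (g1 g2 : EuclideanSpace ℝ (Fin n))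
    (h1 : ‖g1‖ = 1) (h2 : ‖g2‖ = 1) (hne : g1 ≠ -g2)
    (vstar : EuclideanSpace ℝ (Fin n)) (hv : vstar = ‖g1 + g2‖⁻¹ • (g1 + g2))
    (rstar : ℝ) (hr : rstar = (1 + ⟪g1, g2⟫) / ‖g1 + g2‖) :
    IsGreatest {r : ℝ | ∃ v : EuclideanSpace ℝ (Fin n),
        ‖v‖ ≤ 1 ∧ r ≤ ⟪g1, v⟫ ∧ r ≤ ⟪g2, v⟫} rstar ∧
    ‖vstar‖ ≤ 1 ∧ ⟪g1, vstar⟫ = rstar ∧ ⟪g2, vstar⟫ = rstar := by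
  have hs : g1 + g2 ≠ 0 := by
    intro h; exact hne (by linear_combination (norm := module) h)
  have hns : ‖g1 + g2‖ > 0 := norm_pos_iff.mpr hs
  have hsq : ‖g1 + g2‖ ^ 2 = 2 * (1 + ⟪g1, g2⟫) := by
    rw [← real_inner_self_eq_norm_sq]
    have e1 : ⟪g1, g1⟫ = 1 := by
      rw [real_inner_self_eq_norm_sq, h1]; norm_num
    have e2 : ⟪g2, g2⟫ = 1 := by
      rw [real_inner_self_eq_norm_sq, h2]; norm_num
    rw [inner_add_add_self, e1, e2, real_inner_comm g2 g1]; ring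
  have hrstar : rstar = ‖g1 + g2‖ / 2 := by
    rw [hr, div_eq_div_iff hns.ne' two_ne_zero]
    nlinarith [hsq]
  have ha1 : ⟪g1, vstar⟫ = rstar := by
    rw [hv, hr, real_inner_smul_right, inner_add_right]
    have e1 : ⟪g1, g1⟫ = 1 := by
      rw [real_inner_self_eq_norm_sq, h1]; norm_num
    rw [e1]; field_simp
  have ha2 : ⟪g2, vstar⟫ = rstar := by
    rw [hv, hr, real_inner_smul_right, inner_add_right]
    have e2 : ⟪g2, g2⟫ = 1 := by
      rw [real_inner_self_eq_norm_sq, h2]; norm_num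
    rw [real_inner_comm g2 g1, e2]; field_simp; ring
  have hnv : ‖vstar‖ ≤ 1 := by
    rw [hv, norm_smul, norm_inv, norm_norm, inv_mul_cancel₀ hns.ne']
  refine ⟨⟨⟨vstar, hnv, ha1.ge, ha2.ge⟩, ?_⟩, hnv, ha1, ha2⟩
  rintro r ⟨v, hv1, hg1, hg2⟩
  have key : ⟪g1 + g2, v⟫ ≤ ‖g1 + g2‖ := by
    calc ⟪g1 + g2, v⟫ ≤ ‖g1 + g2‖ * ‖v‖ := real_inner_le_norm _ _
    _ ≤ ‖g1 + g2‖ * 1 := by nlinarith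
    _ = ‖g1 + g2‖ := mul_one _
  rw [inner_add_left] at key
  rw [hrstar]; linarith
end

section
/- Let g_1,...,g_m ∈ R^n be nonzero and let w* = Σ_i α*_i ĝ_i with ĝ_i = g_i/‖g_i‖_2 and α* ∈ Δ^m an optimal dual solution with w* ≠ 0. Then the recovered direction v* = w*/‖w*‖_2 lies in both the primal cone K = cone(g_1,...,g_m) and its dual cone K*, i.e., v* belongs to the harmonized cone H = K ∩ K*. -/
open scoped RealInnerProductSpace

/-- **The Chebyshev-center direction lies in the harmonized cone `H = K ∩ K*`.**
For nonzero `g i`, `ĝ i = g i / ‖g i‖₂`, and `α⋆ ∈ Δᵐ` optimal for the dual with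
`w⋆ = ∑ i, α⋆ i • ĝ i ≠ 0`, the recovered direction `v⋆ = w⋆/‖w⋆‖₂` is a conic
combination of the `g i` (membership in `K`) and satisfies `g iᵀ v⋆ ≥ 0` for all `i`
(membership in `K*`). -/
theorem chebyshev_direction_in_harmonized_cone
    (n m : ℕ) (g : Fin m → EuclideanSpace ℝ (Fin n)) (hg : ∀ i, g i ≠ 0)
    (ghat : Fin m → EuclideanSpace ℝ (Fin n)) (hghat : ∀ i, ghat i = ‖g i‖⁻¹ • g i)
    (αstar : Fin m → ℝ) (hα : (∀ i, 0 ≤ αstar i) ∧ (∑ i, αstar i) = 1)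
    (hαopt : ∀ α : Fin m → ℝ, (∀ i, 0 ≤ α i) → (∑ i, α i) = 1 →
      ‖∑ i, αstar i • ghat i‖ ≤ ‖∑ i, α i • ghat i‖)
    (wstar : EuclideanSpace ℝ (Fin n)) (hw : wstar = ∑ i, αstar i • ghat i)
    (hwne : wstar ≠ 0)
    (vstar : EuclideanSpace ℝ (Fin n)) (hv : vstar = ‖wstar‖⁻¹ • wstar) :
    (∃ lam : Fin m → ℝ, (∀ i, 0 ≤ lam i) ∧ vstar = ∑ i, lam i • g i) ∧
    (∀ i, 0 ≤ ⟪g i, vstar⟫) := by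
  obtain ⟨hα0, hα1⟩ := hα
  constructor
  · refine ⟨fun i => ‖wstar‖⁻¹ * (αstar i * ‖g i‖⁻¹), fun i => ?_, ?_⟩
    · have := hα0 i
      positivity
    · rw [hv, hw, Finset.smul_sum]
      refine Finset.sum_congr rfl fun i _ => ?_
      rw [hghat i, smul_smul, smul_smul, mul_assoc]
  · -- dual membership
    intro i
    have key : (0:ℝ) ≤ ⟪wstar, ghat i - wstar⟫ := by
      by_contra hc
      push_neg at hc
      set c : ℝ := -⟪wstar, ghat i - wstar⟫ with hcdef
      have hcpos : 0 < c := by rw [hcdef]; linarith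
      set D : ℝ := ‖ghat i - wstar‖ with hD
      have hden : (0:ℝ) < D ^ 2 + 1 := by positivity
      set t : ℝ := min 1 (c / (D ^ 2 + 1)) with ht
      have htpos : 0 < t := lt_min one_pos (div_pos hcpos hden)
      have ht1 : t ≤ 1 := min_le_left _ _
      set α : Fin m → ℝ := fun j => (1 - t) * αstar j + t * (if j = i then 1 else 0) with hαdef
      have hαnn : ∀ j, 0 ≤ α j := by
        intro j
        have h1 := hα0 j
        have h2 : 0 ≤ (1 - t) * αstar j := mul_nonneg (by linarith) h1
        by_cases hji : j = i
        · subst hji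
          simp only [hαdef, eq_self_iff_true, if_true, mul_one]
          linarith
        · simp only [hαdef, if_neg hji, mul_zero, add_zero]
          exact h2
      have hαsum : ∑ j, α j = 1 := by
        simp only [hαdef]
        rw [Finset.sum_add_distrib, ← Finset.mul_sum, ← Finset.mul_sum, hα1]
        simp
      have hsum : ∑ j, α j • ghat j = wstar + t • (ghat i - wstar) := by
        simp only [hαdef, add_smul, mul_smul]
        rw [Finset.sum_add_distrib, ← Finset.smul_sum, ← Finset.smul_sum, ← hw]
        have : ∑ j, (if j = i then (1:ℝ) else 0) • ghat j = ghat i := by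
          simp [ite_smul]
        rw [this, sub_smul, smul_sub, one_smul]
        abel
      have hopt := hαopt α hαnn hαsum
      rw [← hw, hsum] at hopt
      have hsq : ‖wstar‖ ^ 2 ≤ ‖wstar + t • (ghat i - wstar)‖ ^ 2 := by
        nlinarith [norm_nonneg wstar, norm_nonneg (wstar + t • (ghat i - wstar))]
      have hexp : ‖wstar + t • (ghat i - wstar)‖ ^ 2
          = ‖wstar‖ ^ 2 + 2 * t * ⟪wstar, ghat i - wstar⟫ + t ^ 2 * D ^ 2 := by
        rw [norm_add_sq_real, real_inner_smul_right, norm_smul, Real.norm_eq_abs,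
          abs_of_pos htpos, hD]
        ring
      have h2 : 0 ≤ 2 * ⟪wstar, ghat i - wstar⟫ + t * D ^ 2 := by
        rw [hexp] at hsq
        nlinarith
      have ht2 : t * D ^ 2 < c := by
        have h1 : t ≤ c / (D ^ 2 + 1) := min_le_right _ _
        have h3 : t * (D ^ 2 + 1) ≤ c := by
          calc t * (D ^ 2 + 1) ≤ (c / (D ^ 2 + 1)) * (D ^ 2 + 1) :=
                mul_le_mul_of_nonneg_right h1 (le_of_lt hden)
            _ = c := by field_simp
        nlinarith
      have hwd : ⟪wstar, ghat i - wstar⟫ = -c := by rw [hcdef]; ring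
      rw [hwd] at h2
      linarith
    have he : ⟪wstar, ghat i - wstar⟫ = ⟪wstar, ghat i⟫ - ‖wstar‖ ^ 2 := by
      rw [inner_sub_right, real_inner_self_eq_norm_sq]
    have hgd : (0:ℝ) ≤ ⟪wstar, ghat i⟫ := by
      rw [he] at key
      nlinarith [sq_nonneg ‖wstar‖]
    have hn : (0:ℝ) < ‖g i‖ := norm_pos_iff.mpr (hg i)
    have h2 : ⟪wstar, ghat i⟫ = ‖g i‖⁻¹ * ⟪wstar, g i⟫ := by
      rw [hghat i, real_inner_smul_right]
    rw [h2] at hgd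
    have hgw : (0:ℝ) ≤ ⟪g i, wstar⟫ := by
      rw [real_inner_comm]
      by_contra hneg
      push_neg at hneg
      have : ‖g i‖⁻¹ * ⟪wstar, g i⟫ < 0 := mul_neg_of_pos_of_neg (inv_pos.mpr hn) hneg
      linarith
    rw [hv, real_inner_smul_right]
    exact mul_nonneg (inv_nonneg.mpr (norm_nonneg wstar)) hgw
end
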